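/- Let n₁, n₀ > 0 and N ≥ n₁ + n₀, and let φ₁, …, φ_N ∈ (0,1). Define on the open simplex Δ = {p ∈ ℝ^N : p_i > 0, Σ_{i=1}^N p_i = 1} the function L(p) = Σ_{i=1}^N log p_i − n₁ log(Σ_{i=1}^N φ_i p_i) − n₀ log(1 − Σ_{i=1}^N φ_i p_i) (note 0 < Σ φ_i p_i < 1 on Δ). If p̂ ∈ Δ maximizes L over Δ, then, writing ĉ = Σ_{i=1}^N φ_i p̂_i, the maximizer satisfies the fixed-point equations p̂_i = (n₁ φ_i / ĉ + n₀ (1 − φ_i)/(1 − ĉ) + N − n₁ − n₀)^{-1} for every i = 1, …, N. -/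

import Mathlib

/-- Any maximizer `p̂` over the open simplex of the profile log-likelihood
`L(p) = Σ log pᵢ − n₁ log(Σ φᵢ pᵢ) − n₀ log(1 − Σ φᵢ pᵢ)` satisfies the fixed-point
equations `p̂ᵢ = (n₁ φᵢ/ĉ + n₀ (1 − φᵢ)/(1 − ĉ) + N − n₁ − n₀)⁻¹` with `ĉ = Σ φᵢ p̂ᵢ`. -/
theorem profile_maximizer_fixed_point
    (N : ℕ) (n₁ n₀ : ℝ) (hn₁ : 0 < n₁) (hn₀ : 0 < n₀) (hN : n₁ + n₀ ≤ (N : ℝ))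
    (φ : Fin N → ℝ) (hφ : ∀ i, φ i ∈ Set.Ioo (0 : ℝ) 1)
    (phat : Fin N → ℝ) (hphat_pos : ∀ i, 0 < phat i) (hphat_sum : ∑ i, phat i = 1)
    (hmax : ∀ p : Fin N → ℝ, (∀ i, 0 < p i) → (∑ i, p i = 1) →
      (∑ i, Real.log (p i)) - n₁ * Real.log (∑ i, φ i * p i)
          - n₀ * Real.log (1 - ∑ i, φ i * p i)
        ≤ (∑ i, Real.log (phat i)) - n₁ * Real.log (∑ i, φ i * phat i)
          - n₀ * Real.log (1 - ∑ i, φ i * phat i)) :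
    ∀ i, phat i
      = (n₁ * φ i / (∑ j, φ j * phat j)
          + n₀ * (1 - φ i) / (1 - ∑ j, φ j * phat j) + (N : ℝ) - n₁ - n₀)⁻¹ := by
  intro i
  set c : ℝ := ∑ j, φ j * phat j with hc
  have hc0 : 0 < c :=
    Finset.sum_pos (fun k _ => mul_pos (hφ k).1 (hphat_pos k)) ⟨i, Finset.mem_univ i⟩
  have hc1 : c < 1 := by
    have : c < ∑ j, phat j := by
      refine Finset.sum_lt_sum_of_nonempty ⟨i, Finset.mem_univ i⟩ (fun k _ => ?_)
      nlinarith [(hφ k).2, hphat_pos k, (hφ k).1]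
    linarith [hphat_sum ▸ this]
  set g : Fin N → ℝ := fun k => n₁ * φ k / c + n₀ * (1 - φ k) / (1 - c) with hg
  -- first-order conditions
  have key : ∀ a b : Fin N, (phat a)⁻¹ - g a = (phat b)⁻¹ - g b := by
    intro a b
    by_cases hab : a = b
    · rw [hab]
    set d : Fin N → ℝ := fun k => (if k = a then 1 else 0) - (if k = b then 1 else 0) with hd
    have hsum_d : ∑ k, d k = 0 := by
      simp [hd, Finset.sum_sub_distrib, Finset.sum_ite_eq']
    set ε : ℝ := min (phat a) (phat b) with hε
    have hε0 : 0 < ε := lt_min (hphat_pos a) (hphat_pos b)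
    have hpos : ∀ t : ℝ, |t| < ε → ∀ k, 0 < phat k + t * d k := by
      intro t ht k
      have hta : |t| < phat a := lt_of_lt_of_le ht (min_le_left _ _)
      have htb : |t| < phat b := lt_of_lt_of_le ht (min_le_right _ _)
      have h1 := neg_abs_le t
      have h2 := le_abs_self t
      by_cases hk : k = a
      · subst hk
        have : d k = 1 := by simp [hd, hab]
        rw [this]; linarith
      · by_cases hk' : k = b
        · subst hk'
          have : d k = -1 := by simp [hd, hk]
          rw [this]; linarith
        · have : d k = 0 := by simp [hd, hk, hk']
          rw [this]; simpa using hphat_pos k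
    set F : ℝ → ℝ := fun t =>
      (∑ k, Real.log (phat k + t * d k))
        - n₁ * Real.log (∑ k, φ k * (phat k + t * d k))
        - n₀ * Real.log (1 - ∑ k, φ k * (phat k + t * d k)) with hF
    have hlocal : IsLocalMax F 0 := by
      filter_upwards [Metric.ball_mem_nhds (0 : ℝ) hε0] with t ht
      rw [Metric.mem_ball, Real.dist_eq, sub_zero] at ht
      have hsum1 : ∑ k, (phat k + t * d k) = 1 := by
        rw [Finset.sum_add_distrib, hphat_sum, ← Finset.mul_sum, hsum_d, mul_zero, add_zero]
      have := hmax (fun k => phat k + t * d k) (hpos t ht) hsum1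
      simpa [hF] using this
    have hφd : ∑ k, φ k * d k = φ a - φ b := by
      simp [hd, mul_sub, mul_ite, mul_one, mul_zero, Finset.sum_sub_distrib,
        Finset.sum_ite_eq']
    have h1 : ∀ k : Fin N, HasDerivAt (fun t : ℝ => phat k + t * d k) (d k) 0 := by
      intro k
      simpa using ((hasDerivAt_id (0 : ℝ)).mul_const (d k)).const_add (phat k)
    have h2 : HasDerivAt (fun t => ∑ k, Real.log (phat k + t * d k))
        (∑ k, d k / phat k) 0 := by
      refine HasDerivAt.fun_sum (fun k _ => ?_)
      have := (h1 k).log (by simpa using (hphat_pos k).ne')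
      simpa using this
    have h3 : HasDerivAt (fun t => ∑ k, φ k * (phat k + t * d k)) (φ a - φ b) 0 := by
      have := HasDerivAt.fun_sum (fun k (_ : k ∈ Finset.univ) => (h1 k).const_mul (φ k))
      rwa [hφd] at this
    have hc0' : (∑ k, φ k * (phat k + (0:ℝ) * d k)) = c := by simp [hc]
    have h4 : HasDerivAt (fun t => n₁ * Real.log (∑ k, φ k * (phat k + t * d k)))
        (n₁ * ((φ a - φ b) / c)) 0 := by
      refine HasDerivAt.const_mul n₁ ?_
      have := h3.log (by rw [hc0']; exact hc0.ne')
      rwa [hc0'] at this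
    have h5 : HasDerivAt (fun t => n₀ * Real.log (1 - ∑ k, φ k * (phat k + t * d k)))
        (n₀ * (-(φ a - φ b) / (1 - c))) 0 := by
      refine HasDerivAt.const_mul n₀ ?_
      have h6 : HasDerivAt (fun t => 1 - ∑ k, φ k * (phat k + t * d k)) (-(φ a - φ b)) 0 :=
        h3.const_sub 1
      have := h6.log (by simp only [hc0']; exact (sub_pos.2 hc1).ne')
      simpa [hc0'] using this
    have hderiv : HasDerivAt F
        ((∑ k, d k / phat k) - n₁ * ((φ a - φ b) / c) - n₀ * (-(φ a - φ b) / (1 - c))) 0 :=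
      (h2.sub h4).sub h5
    have hzero := hlocal.hasDerivAt_eq_zero hderiv
    have hdp : ∑ k, d k / phat k = (phat a)⁻¹ - (phat b)⁻¹ := by
      simp [hd, sub_div, Finset.sum_sub_distrib, ite_div, Finset.sum_ite_eq', one_div]
    rw [hdp] at hzero
    have hc0ne : c ≠ 0 := hc0.ne'
    have hc1ne : (1 : ℝ) - c ≠ 0 := (sub_pos.2 hc1).ne'
    have expand : (phat a)⁻¹ - g a - ((phat b)⁻¹ - g b)
        = (phat a)⁻¹ - (phat b)⁻¹ - n₁ * ((φ a - φ b) / c)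
            - n₀ * (-(φ a - φ b) / (1 - c)) := by
      simp only [hg]
      field_simp
      ring
    have : (phat a)⁻¹ - g a - ((phat b)⁻¹ - g b) = 0 := by rw [expand, hzero]
    linarith
  -- identify the constant
  have hgsum : ∑ k, phat k * g k = n₁ + n₀ := by
    have e1 : ∑ k, (1 - φ k) * phat k = 1 - c := by
      simp [sub_mul, Finset.sum_sub_distrib, hphat_sum, hc]
    have : ∑ k, phat k * g k
        = n₁ * (∑ k, φ k * phat k) / c + n₀ * (∑ k, (1 - φ k) * phat k) / (1 - c) := by
      rw [Finset.mul_sum, Finset.mul_sum, Finset.sum_div, Finset.sum_div,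
        ← Finset.sum_add_distrib]
      refine Finset.sum_congr rfl (fun k _ => ?_)
      simp only [hg]
      ring
    rw [this, ← hc, e1, mul_div_assoc, mul_div_assoc, div_self hc0.ne',
      div_self (sub_pos.2 hc1).ne']
    ring
  have hsumlam : ∑ k, phat k * ((phat k)⁻¹ - g k) = (N : ℝ) - (n₁ + n₀) := by
    have : ∑ k, phat k * ((phat k)⁻¹ - g k) = ∑ k, (1 - phat k * g k) := by
      refine Finset.sum_congr rfl (fun k _ => ?_)
      rw [mul_sub, mul_inv_cancel₀ (hphat_pos k).ne']
    rw [this, Finset.sum_sub_distrib, hgsum]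
    simp
  have hsumlam2 : ∑ k, phat k * ((phat k)⁻¹ - g k) = (phat i)⁻¹ - g i := by
    have : ∀ k, phat k * ((phat k)⁻¹ - g k) = phat k * ((phat i)⁻¹ - g i) := by
      intro k; rw [key k i]
    rw [Finset.sum_congr rfl (fun k _ => this k), ← Finset.sum_mul, hphat_sum, one_mul]
  have hfin2 : n₁ * φ i / c + n₀ * (1 - φ i) / (1 - c) + (N : ℝ) - n₁ - n₀ = (phat i)⁻¹ := by
    have h := hsumlam2.symm.trans hsumlam
    simp only [hg] at h ⊢
    linarith
  rw [hfin2, inv_inv]
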